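/- For all positive reals d₁,...,d₅ satisfying d_{i-1} + d_{i+1} ≥ d_i for each i ∈ {1,...,5} (indices modulo 5), the polynomial (Σᵢ dᵢxᵢ²)·(x^{∘2})^T H x^{∘2} is a sum of squares, via the explicit identity: (Σᵢ dᵢxᵢ²)(x^{∘2})^T H x^{∘2} = d₁x₁²(x₁²+x₂²+x₅²-x₃²-x₄²)² + d₂x₂²(x₁²+x₂²+x₃²-x₄²-x₅²)² + d₃x₃²(x₂²+x₃²+x₄²-x₅²-x₁²)² + d₄x₄²(x₃²+x₄²+x₅²-x₁²-x₂²)² + d₅x₅²(x₁²+x₄²+x₅²-x₂²-x₃²)² + 4x₁²x₂²x₅²(d₅-d₁+d₂) + 4x₁²x₂²x₃²(d₃+d₁-d₂) + 4x₂²x₃²x₄²(d₄+d₂-d₃) + 4x₃²x₄²x₅²(d₅+d₃-d₄) + 4x₄²x₅²x₁²(d₁+d₄-d₅). -/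

import Mathlib

open MvPolynomial

def IsSOS {n : ℕ} (f : MvPolynomial (Fin n) ℝ) : Prop :=
  ∃ (m : ℕ) (p : Fin m → MvPolynomial (Fin n) ℝ), f = ∑ i, (p i) ^ 2

def Horn : Matrix (Fin 5) (Fin 5) ℝ :=
  !![1,1,-1,-1,1; 1,1,1,-1,-1; -1,1,1,1,-1; -1,-1,1,1,1; 1,-1,-1,1,1]

noncomputable def quartForm {n : ℕ} (M : Matrix (Fin n) (Fin n) ℝ) :
    MvPolynomial (Fin n) ℝ :=
  ∑ i, ∑ j, MvPolynomial.C (M i j) * X i ^ 2 * X j ^ 2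

lemma sq_term (a : ℝ) (ha : 0 ≤ a) (q : MvPolynomial (Fin 5) ℝ) :
    (C (Real.sqrt a) * q) ^ 2 = C a * q ^ 2 := by
  rw [mul_pow, ← C_pow, Real.sq_sqrt ha]

set_option maxHeartbeats 4000000 in
theorem scaled_horn_sos_with_identity (d : Fin 5 → ℝ)
    (hpos : ∀ i, 0 < d i)
    (hcyc : ∀ i : Fin 5, d (i - 1) + d (i + 1) ≥ d i) :
    ((∑ i, C (d i) * X i ^ 2) * quartForm Horn =
      C (d 0) * X 0 ^ 2 * (X 0 ^ 2 + X 1 ^ 2 + X 4 ^ 2 - X 2 ^ 2 - X 3 ^ 2) ^ 2 +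
      C (d 1) * X 1 ^ 2 * (X 0 ^ 2 + X 1 ^ 2 + X 2 ^ 2 - X 3 ^ 2 - X 4 ^ 2) ^ 2 +
      C (d 2) * X 2 ^ 2 * (X 1 ^ 2 + X 2 ^ 2 + X 3 ^ 2 - X 4 ^ 2 - X 0 ^ 2) ^ 2 +
      C (d 3) * X 3 ^ 2 * (X 2 ^ 2 + X 3 ^ 2 + X 4 ^ 2 - X 0 ^ 2 - X 1 ^ 2) ^ 2 +
      C (d 4) * X 4 ^ 2 * (X 0 ^ 2 + X 3 ^ 2 + X 4 ^ 2 - X 1 ^ 2 - X 2 ^ 2) ^ 2 +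
      C (4 * (d 4 - d 0 + d 1)) * (X 0 ^ 2 * X 1 ^ 2 * X 4 ^ 2) +
      C (4 * (d 2 + d 0 - d 1)) * (X 0 ^ 2 * X 1 ^ 2 * X 2 ^ 2) +
      C (4 * (d 3 + d 1 - d 2)) * (X 1 ^ 2 * X 2 ^ 2 * X 3 ^ 2) +
      C (4 * (d 4 + d 2 - d 3)) * (X 2 ^ 2 * X 3 ^ 2 * X 4 ^ 2) +
      C (4 * (d 0 + d 3 - d 4)) * (X 3 ^ 2 * X 4 ^ 2 * X 0 ^ 2)) ∧
    IsSOS ((∑ i, C (d i) * X i ^ 2) * quartForm Horn) := by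
  have key : ((∑ i, C (d i) * X i ^ 2) * quartForm Horn =
      C (d 0) * X 0 ^ 2 * (X 0 ^ 2 + X 1 ^ 2 + X 4 ^ 2 - X 2 ^ 2 - X 3 ^ 2) ^ 2 +
      C (d 1) * X 1 ^ 2 * (X 0 ^ 2 + X 1 ^ 2 + X 2 ^ 2 - X 3 ^ 2 - X 4 ^ 2) ^ 2 +
      C (d 2) * X 2 ^ 2 * (X 1 ^ 2 + X 2 ^ 2 + X 3 ^ 2 - X 4 ^ 2 - X 0 ^ 2) ^ 2 +
      C (d 3) * X 3 ^ 2 * (X 2 ^ 2 + X 3 ^ 2 + X 4 ^ 2 - X 0 ^ 2 - X 1 ^ 2) ^ 2 +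
      C (d 4) * X 4 ^ 2 * (X 0 ^ 2 + X 3 ^ 2 + X 4 ^ 2 - X 1 ^ 2 - X 2 ^ 2) ^ 2 +
      C (4 * (d 4 - d 0 + d 1)) * (X 0 ^ 2 * X 1 ^ 2 * X 4 ^ 2) +
      C (4 * (d 2 + d 0 - d 1)) * (X 0 ^ 2 * X 1 ^ 2 * X 2 ^ 2) +
      C (4 * (d 3 + d 1 - d 2)) * (X 1 ^ 2 * X 2 ^ 2 * X 3 ^ 2) +
      C (4 * (d 4 + d 2 - d 3)) * (X 2 ^ 2 * X 3 ^ 2 * X 4 ^ 2) +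
      C (4 * (d 0 + d 3 - d 4)) * (X 3 ^ 2 * X 4 ^ 2 * X 0 ^ 2)) := by
    simp only [quartForm, Horn, Fin.sum_univ_five, Matrix.cons_val_zero,
      Matrix.cons_val_one, Matrix.head_cons, Matrix.cons_val_two, Matrix.tail_cons,
      Matrix.cons_val_three, Matrix.cons_val_four, Matrix.head_fin_const,
      Matrix.of_apply, Matrix.cons_val', Matrix.empty_val', Matrix.cons_val_fin_one,
      map_neg, map_one, map_add, map_sub, map_mul, map_ofNat, C_1]
    ring
  refine ⟨key, ?_⟩
  have e0 : (0 : Fin 5) - 1 = 4 := by decide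
  have e4 : (4 : Fin 5) + 1 = 0 := by decide
  have e1 : (0 : Fin 5) + 1 = 1 := by decide
  have e3 : (4 : Fin 5) - 1 = 3 := by decide
  have hc0 := hcyc 0; rw [e0, e1] at hc0
  have hc1 := hcyc 1
  have hc2 := hcyc 2
  have hc3 := hcyc 3
  have hc4 := hcyc 4; rw [e4, e3] at hc4
  norm_num at hc1 hc2 hc3
  rw [show (1 : Fin 5) + 1 = 2 from by decide] at hc1
  rw [show (2 : Fin 5) - 1 = 1 from by decide, show (2 : Fin 5) + 1 = 3 from by decide] at hc2
  rw [show (3 : Fin 5) - 1 = 2 from by decide, show (3 : Fin 5) + 1 = 4 from by decide] at hc3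
  have n0 : (0:ℝ) ≤ 4 * (d 4 - d 0 + d 1) := by linarith
  have n1 : (0:ℝ) ≤ 4 * (d 2 + d 0 - d 1) := by linarith
  have n2 : (0:ℝ) ≤ 4 * (d 3 + d 1 - d 2) := by linarith
  have n3 : (0:ℝ) ≤ 4 * (d 4 + d 2 - d 3) := by linarith
  have n4 : (0:ℝ) ≤ 4 * (d 0 + d 3 - d 4) := by linarith
  refine ⟨10, ![
    C (Real.sqrt (d 0)) * (X 0 * (X 0 ^ 2 + X 1 ^ 2 + X 4 ^ 2 - X 2 ^ 2 - X 3 ^ 2)),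
    C (Real.sqrt (d 1)) * (X 1 * (X 0 ^ 2 + X 1 ^ 2 + X 2 ^ 2 - X 3 ^ 2 - X 4 ^ 2)),
    C (Real.sqrt (d 2)) * (X 2 * (X 1 ^ 2 + X 2 ^ 2 + X 3 ^ 2 - X 4 ^ 2 - X 0 ^ 2)),
    C (Real.sqrt (d 3)) * (X 3 * (X 2 ^ 2 + X 3 ^ 2 + X 4 ^ 2 - X 0 ^ 2 - X 1 ^ 2)),
    C (Real.sqrt (d 4)) * (X 4 * (X 0 ^ 2 + X 3 ^ 2 + X 4 ^ 2 - X 1 ^ 2 - X 2 ^ 2)),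
    C (Real.sqrt (4 * (d 4 - d 0 + d 1))) * (X 0 * X 1 * X 4),
    C (Real.sqrt (4 * (d 2 + d 0 - d 1))) * (X 0 * X 1 * X 2),
    C (Real.sqrt (4 * (d 3 + d 1 - d 2))) * (X 1 * X 2 * X 3),
    C (Real.sqrt (4 * (d 4 + d 2 - d 3))) * (X 2 * X 3 * X 4),
    C (Real.sqrt (4 * (d 0 + d 3 - d 4))) * (X 3 * X 4 * X 0)], ?_⟩
  rw [key]
  simp only [Fin.sum_univ_succ, Fin.sum_univ_zero, Matrix.cons_val_zero,
    Matrix.cons_val_succ]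
  rw [sq_term _ (hpos 0).le, sq_term _ (hpos 1).le, sq_term _ (hpos 2).le,
    sq_term _ (hpos 3).le, sq_term _ (hpos 4).le,
    sq_term _ n0, sq_term _ n1, sq_term _ n2, sq_term _ n3, sq_term _ n4]
  ring
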